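/- For integers a, b, k with k ≥ b > a ≥ 1 and m ≥ 1: Σ_{λ ∈ BD_{a,b,k}(m)} u^{ℓ_a(λ)} v^{ℓ_b(λ)} q^{|λ|} = Σ_{h=0}^{m} u^{m−h} v^{h} q^{k·C(m,2) + k·C(h,2) + ma + (b−a)h} [m choose h]_k. -/

import Mathlib

/-- The finite q-Pochhammer symbol `(t;q)_n = ∏_{i=0}^{n-1} (1 - t qⁱ)`. -/
noncomputable def qPoch (t q : ℂ) (n : ℕ) : ℂ := ∏ i ∈ Finset.range n, (1 - t * q ^ i)

/-- The infinite q-Pochhammer symbol `(t;q)_∞ = ∏_{i≥0} (1 - t qⁱ)`. -/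
noncomputable def qPochInf (t q : ℂ) : ℂ := ∏' i : ℕ, (1 - t * q ^ i)

/-- The Gaussian binomial coefficient `[A choose B]` in base `q`:
`(q;q)_A / ((q;q)_B (q;q)_{A-B})` for `A ≥ B ≥ 0`, and `0` otherwise. -/
noncomputable def gbinom (q : ℂ) (A B : ℕ) : ℂ :=
  if B ≤ A then qPoch q q A / (qPoch q q B * qPoch q q (A - B)) else 0

/-- `lcount k c l` is the number of parts of `l` congruent to `c` modulo `k`. -/
def lcount (k c : ℕ) (l : List ℕ) : ℕ := (l.filter (fun x => x % k = c % k)).length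

/-- Membership in `BD_{a,b,k}(m)`: partitions `(λ_1,…,λ_m)` with exactly `m` parts, each
`≡ a` or `b (mod k)`, `λ_m ∈ {a, b}`, and for consecutive parts:
`λ_i - λ_{i+1} ≥ k` with strict inequality if `λ_i ≡ b (mod k)`, and
`λ_i - λ_{i+1} ≤ 2k` with strict inequality if `λ_{i+1} ≡ a (mod k)`. -/
def memBD (a b k m : ℕ) (l : List ℕ) : Prop :=
  l.Pairwise (· ≥ ·) ∧ l.length = m ∧
    (∀ x ∈ l, 0 < x ∧ (x % k = a % k ∨ x % k = b % k)) ∧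
    (l.getLast? = some a ∨ l.getLast? = some b) ∧
    l.Chain' (fun x y => (y + k ≤ x ∧ (x % k = b % k → y + k < x)) ∧
      (x ≤ y + 2 * k ∧ (y % k = a % k → x < y + 2 * k)))

section Aux

/-- `bval a b x` is `b` if `x = true`, else `a`. -/
def bval (a b : ℕ) : Bool → ℕ
  | true => b
  | false => a

/-- Build the unique partition in `BD_{a,b,k}` with the given residue word (top-down). -/
def bdBuild (a b k : ℕ) : List Bool → List ℕ
  | [] => []
  | x :: t => (bval a b x + k * (t.length + t.count true)) :: bdBuild a b k t

/-- `wIdx w = Σ_{i : w_i = true} i` (0-based). -/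
def wIdx : List Bool → ℕ
  | [] => 0
  | _ :: t => wIdx t + t.count true

variable {a b k : ℕ}

lemma hmodne (ha : 1 ≤ a) (hab : a < b) (hbk : b ≤ k) : a % k ≠ b % k := by
  have h1 : a % k = a := Nat.mod_eq_of_lt (by omega)
  rcases eq_or_lt_of_le hbk with h | h
  · subst h; simp [Nat.mod_self]; omega
  · rw [h1, Nat.mod_eq_of_lt h]; omega

lemma bdBuild_length (w : List Bool) : (bdBuild a b k w).length = w.length := by
  induction w with
  | nil => rfl
  | cons x t ih => simp [bdBuild, ih]

lemma count_false_eq (w : List Bool) : w.count false = w.length - w.count true := by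
  induction w with
  | nil => rfl
  | cons x t ih =>
    have := List.count_le_length (l := t) (a := true)
    cases x <;> simp [List.count_cons, ih] <;> omega

lemma bdBuild_sum (hab : a < b) (w : List Bool) :
    (bdBuild a b k w).sum
      = a * w.length + (b - a) * w.count true + k * (Nat.choose w.length 2 + wIdx w) := by
  obtain ⟨d, rfl⟩ : ∃ d, b = a + d := ⟨b - a, by omega⟩
  induction w with
  | nil => rfl
  | cons x t ih =>
    have hch : (t.length + 1).choose 2 = t.length.choose 2 + t.length := by
      rw [Nat.choose_succ_succ]; simp [Nat.choose_one_right, Nat.add_comm]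
    cases x <;>
      simp [bdBuild, bval, List.count_cons, wIdx, ih, hch, Nat.add_sub_cancel_left] <;> ring

lemma bdBuild_lcount_a (hne : a % k ≠ b % k) (w : List Bool) :
    lcount k a (bdBuild a b k w) = w.count false := by
  induction w with
  | nil => rfl
  | cons x t ih =>
    have hm : (bval a b x + k * (t.length + t.count true)) % k = bval a b x % k :=
      Nat.add_mul_mod_self_left _ _ _
    cases x <;> simp [bdBuild, lcount, List.filter_cons, hm, bval, hne, Ne.symm hne,
      List.count_cons] <;> simpa [lcount] using ih

lemma bdBuild_lcount_b (hne : a % k ≠ b % k) (w : List Bool) :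
    lcount k b (bdBuild a b k w) = w.count true := by
  induction w with
  | nil => rfl
  | cons x t ih =>
    have hm : (bval a b x + k * (t.length + t.count true)) % k = bval a b x % k :=
      Nat.add_mul_mod_self_left _ _ _
    cases x <;> simp [bdBuild, lcount, List.filter_cons, hm, bval, hne, Ne.symm hne,
      List.count_cons] <;> simpa [lcount] using ih

lemma bdBuild_chain (ha : 1 ≤ a) (hab : a < b) (hbk : b ≤ k) (hne : a % k ≠ b % k)
    (w : List Bool) :
    (bdBuild a b k w).Chain' (fun x y => (y + k ≤ x ∧ (x % k = b % k → y + k < x)) ∧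
      (x ≤ y + 2 * k ∧ (y % k = a % k → x < y + 2 * k))) := by
  induction w with
  | nil => simp [bdBuild, List.Chain']
  | cons x t ih =>
    cases t with
    | nil => simp [bdBuild, List.Chain']
    | cons y t' =>
      rw [show bdBuild a b k (x :: y :: t')
            = (bval a b x + k * ((y :: t').length + (y :: t').count true))
              :: (bval a b y + k * (t'.length + t'.count true)) :: bdBuild a b k t' from rfl]
      simp only [List.Chain', List.isChain_cons_cons]
      constructor
      · simp only [Nat.add_mul_mod_self_left]
        cases x <;> cases y <;>
          simp [bval, List.count_cons, hne, Ne.symm hne, Nat.mul_add, Nat.mul_one] <;> omega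
      · exact ih

lemma bdBuild_parts (ha : 1 ≤ a) (hab : a < b) (w : List Bool) :
    ∀ x ∈ bdBuild a b k w, 0 < x ∧ (x % k = a % k ∨ x % k = b % k) := by
  induction w with
  | nil => simp [bdBuild]
  | cons x t ih =>
    intro z hz
    rcases List.mem_cons.mp hz with hz | hz
    · subst hz
      refine ⟨by cases x <;> simp [bval] <;> omega, ?_⟩
      cases x <;> simp [bval, Nat.add_mul_mod_self_left]
    · exact ih z hz

lemma bdBuild_last (w : List Bool) (hw : w ≠ []) :
    (bdBuild a b k w).getLast? = some a ∨ (bdBuild a b k w).getLast? = some b := by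
  induction w with
  | nil => simp at hw
  | cons x t ih =>
    cases t with
    | nil => cases x <;> simp [bdBuild, bval]
    | cons y t' =>
      rw [show bdBuild a b k (x :: y :: t')
            = (bval a b x + k * ((y :: t').length + (y :: t').count true))
              :: (bval a b y + k * (t'.length + t'.count true)) :: bdBuild a b k t' from rfl]
      rw [List.getLast?_cons_cons]
      rw [show (bval a b y + k * (t'.length + t'.count true)) :: bdBuild a b k t'
            = bdBuild a b k (y :: t') from rfl]
      exact ih (by simp)

lemma bdBuild_memBD (ha : 1 ≤ a) (hab : a < b) (hbk : b ≤ k) (hne : a % k ≠ b % k)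
    (w : List Bool) (hw : w ≠ []) : memBD a b k w.length (bdBuild a b k w) := by
  have hch := bdBuild_chain ha hab hbk hne w
  refine ⟨?_, bdBuild_length w, bdBuild_parts ha hab w, bdBuild_last w hw, hch⟩
  have : (bdBuild a b k w).Chain' (· ≥ ·) := hch.imp (fun h => by omega)
  exact List.isChain_iff_pairwise.mp this

lemma bdBuild_inj (hab : a < b) : Function.Injective (bdBuild a b k) := by
  intro w w' h
  induction w generalizing w' with
  | nil => cases w' with
    | nil => rfl
    | cons y t => simp [bdBuild] at h
  | cons x t ih =>
    cases w' with
    | nil => simp [bdBuild] at h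
    | cons y t' =>
      simp only [bdBuild, List.cons.injEq] at h
      obtain ⟨h1, h2⟩ := h
      have ht : t = t' := ih h2
      subst ht
      have hv : bval a b x = bval a b y := by omega
      have : x = y := by cases x <;> cases y <;> simp [bval] at hv ⊢ <;> omega
      rw [this]

lemma memBD_surj (ha : 1 ≤ a) (hab : a < b) (hbk : b ≤ k) (hne : a % k ≠ b % k) :
    ∀ l : List ℕ, memBD a b k l.length l → ∃ w : List Bool, bdBuild a b k w = l := by
  intro l
  induction l with
  | nil => exact fun _ => ⟨[], rfl⟩
  | cons x t ih =>
    intro h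
    obtain ⟨hsort, -, hparts, hlast, hchain⟩ := h
    cases t with
    | nil =>
      rcases hlast with hl | hl
      · simp only [List.getLast?_singleton, Option.some.injEq] at hl
        exact ⟨[false], by simp [bdBuild, bval, hl]⟩
      · simp only [List.getLast?_singleton, Option.some.injEq] at hl
        exact ⟨[true], by simp [bdBuild, bval, hl]⟩
    | cons y t' =>
      have htail : memBD a b k (y :: t').length (y :: t') := by
        refine ⟨hsort.of_cons, rfl, fun z hz => hparts z (List.mem_cons_of_mem _ hz), ?_,
          hchain.tail⟩
        rwa [List.getLast?_cons_cons] at hlast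
      obtain ⟨w, hw⟩ := ih htail
      cases w with
      | nil => simp [bdBuild] at hw
      | cons yb t'' =>
        have hw' := hw
        simp only [bdBuild, List.cons.injEq] at hw'
        obtain ⟨hy, -⟩ := hw'
        obtain ⟨⟨h1, h2⟩, h3, h4⟩ := (List.isChain_cons_cons.mp hchain).1
        obtain ⟨-, hres⟩ := hparts x List.mem_cons_self
        have hymod : y % k = bval a b yb % k := by
          rw [← hy]; exact (Nat.add_mul_mod_self_left _ _ _)
        have hkey : ∀ xb : Bool, x % k = bval a b xb % k →
            x = bval a b xb + k * ((yb :: t'').length + (yb :: t'').count true) →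
            ∃ w : List Bool, bdBuild a b k w = x :: y :: t' := by
          intro xb _ hx
          refine ⟨xb :: yb :: t'', ?_⟩
          rw [show bdBuild a b k (xb :: yb :: t'')
                = (bval a b xb + k * ((yb :: t'').length + (yb :: t'').count true))
                  :: bdBuild a b k (yb :: t'') from rfl, hw, ← hx]
        have hc0 : k * ((false :: t'').length + (false :: t'').count true)
            = k * (t''.length + t''.count true) + k := by
          simp [List.count_cons]; ring
        have hc1 : k * ((true :: t'').length + (true :: t'').count true)
            = k * (t''.length + t''.count true) + 2 * k := by
          simp [List.count_cons]; ring
        rcases hres with hx | hx <;> cases yb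
        · -- x ≡ a, yb = false : x = y + k
          simp only [bval] at hymod hy
          have h4' : x < y + 2 * k := h4 hymod
          have hv : x % k = (y + k) % k := by rw [Nat.add_mod_right, hymod, hx]
          have hd : k ∣ x - (y + k) := (Nat.modEq_iff_dvd' h1).mp hv.symm
          have h0 : x - (y + k) = 0 := Nat.eq_zero_of_dvd_of_lt hd (by omega)
          apply hkey false (by simpa [bval] using hx)
          simp only [bval]
          rw [hc0]
          omega
        · -- x ≡ a, yb = true : x = y + (k + (k + a - b))
          simp only [bval] at hymod hy
          have hv : x % k = (y + (k + (k + a - b))) % k := by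
            have h5 : (y + (k + (k + a - b))) % k = (b + (k + (k + a - b))) % k :=
              Nat.ModEq.add_right _ hymod
            have h6 : b + (k + (k + a - b)) = k + (k + a) := by omega
            rw [h5, h6, Nat.add_mod_left, Nat.add_mod_left, hx]
          rcases le_total x (y + (k + (k + a - b))) with hle | hle
          · have hd : k ∣ (y + (k + (k + a - b))) - x := (Nat.modEq_iff_dvd' hle).mp hv
            have h0 : (y + (k + (k + a - b))) - x = 0 :=
              Nat.eq_zero_of_dvd_of_lt hd (by omega)
            apply hkey false (by simpa [bval] using hx)
            simp only [bval]
            rw [hc1]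
            omega
          · have hd : k ∣ x - (y + (k + (k + a - b))) := (Nat.modEq_iff_dvd' hle).mp hv.symm
            have h0 : x - (y + (k + (k + a - b))) = 0 :=
              Nat.eq_zero_of_dvd_of_lt hd (by omega)
            apply hkey false (by simpa [bval] using hx)
            simp only [bval]
            rw [hc1]
            omega
        · -- x ≡ b, yb = false : x = y + (k + (b - a))
          simp only [bval] at hymod hy
          have h2' : y + k < x := h2 hx
          have h4' : x < y + 2 * k := h4 hymod
          have hv : x % k = (y + (k + (b - a))) % k := by
            have h5 : (y + (k + (b - a))) % k = (a + (k + (b - a))) % k :=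
              Nat.ModEq.add_right _ hymod
            have h6 : a + (k + (b - a)) = k + b := by omega
            rw [h5, h6, Nat.add_mod_left, hx]
          rcases le_total x (y + (k + (b - a))) with hle | hle
          · have hd : k ∣ (y + (k + (b - a))) - x := (Nat.modEq_iff_dvd' hle).mp hv
            have h0 : (y + (k + (b - a))) - x = 0 :=
              Nat.eq_zero_of_dvd_of_lt hd (by omega)
            apply hkey true (by simpa [bval] using hx)
            simp only [bval]
            rw [hc0]
            omega
          · have hd : k ∣ x - (y + (k + (b - a))) := (Nat.modEq_iff_dvd' hle).mp hv.symm
            have h0 : x - (y + (k + (b - a))) = 0 :=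
              Nat.eq_zero_of_dvd_of_lt hd (by omega)
            apply hkey true (by simpa [bval] using hx)
            simp only [bval]
            rw [hc0]
            omega
        · -- x ≡ b, yb = true : x = y + 2k
          simp only [bval] at hymod hy
          have h2' : y + k < x := h2 hx
          have hv : x % k = (y + 2 * k) % k := by
            have h6 : y + 2 * k = y + k + k := by ring
            rw [h6, Nat.add_mod_right, Nat.add_mod_right, hymod, hx]
          have hd : k ∣ (y + 2 * k) - x := (Nat.modEq_iff_dvd' h3).mp hv
          have h0 : (y + 2 * k) - x = 0 := Nat.eq_zero_of_dvd_of_lt hd (by omega)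
          apply hkey true (by simpa [bval] using hx)
          simp only [bval]
          rw [hc1]
          omega

lemma qPoch_succ (Q : ℂ) (n : ℕ) : qPoch Q Q (n + 1) = qPoch Q Q n * (1 - Q ^ (n + 1)) := by
  rw [qPoch, Finset.prod_range_succ, ← qPoch, pow_succ']

lemma qPoch_ne_zero {Q : ℂ} (hQ : ‖Q‖ < 1) (n : ℕ) : qPoch Q Q n ≠ 0 := by
  rw [qPoch]
  apply Finset.prod_ne_zero_iff.mpr
  intro i _ hzero
  have h1 : Q * Q ^ i = 1 := by linear_combination -hzero
  have h2 : ‖Q * Q ^ i‖ < 1 := by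
    rcases eq_or_ne Q 0 with rfl | hQ0
    · simp
    · rw [norm_mul, norm_pow]
      calc ‖Q‖ * ‖Q‖ ^ i ≤ ‖Q‖ * 1 := by
            apply mul_le_mul_of_nonneg_left _ (norm_nonneg _)
            exact pow_le_one₀ (norm_nonneg _) hQ.le
        _ < 1 := by rw [mul_one]; exact hQ
  rw [h1] at h2
  simp at h2

lemma gauss_sum_mul (Q : ℂ) : ∀ m h : ℕ, h ≤ m →
    (∑ S ∈ (Finset.range m).powersetCard h, Q ^ (∑ i ∈ S, i)) *
      (qPoch Q Q h * qPoch Q Q (m - h)) = Q ^ (h.choose 2) * qPoch Q Q m := by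
  intro m
  induction m with
  | zero =>
    intro h hh
    interval_cases h
    simp [qPoch]
  | succ m ih =>
    intro h hh
    cases h with
    | zero => simp [qPoch, Nat.choose]
    | succ h' =>
      have hmem : m ∉ Finset.range m := by simp
      rw [show Finset.range (m + 1) = insert m (Finset.range m) from by rw [Finset.range_add_one],
          Finset.powersetCard_succ_insert hmem]
      rw [Finset.sum_union ?disj, Finset.sum_image ?inj]
      case inj =>
        intro S hS T hT hST
        have hmS : m ∉ S := fun hc => hmem (Finset.mem_powersetCard.mp hS |>.1 hc)
        have hmT : m ∉ T := fun hc => hmem (Finset.mem_powersetCard.mp hT |>.1 hc)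
        have := congrArg (fun s => Finset.erase s m) hST
        simpa [Finset.erase_insert hmS, Finset.erase_insert hmT] using this
      case disj =>
        rw [Finset.disjoint_left]
        intro S hS hS'
        obtain ⟨T, hT, rfl⟩ := Finset.mem_image.mp hS'
        have h5 : m ∈ insert m T := Finset.mem_insert_self _ _
        have h6 := Finset.mem_powersetCard.mp hS |>.1 h5
        simp at h6
      have himg : ∑ S ∈ (Finset.range m).powersetCard h', Q ^ (∑ i ∈ insert m S, i)
          = Q ^ m * ∑ S ∈ (Finset.range m).powersetCard h', Q ^ (∑ i ∈ S, i) := by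
        rw [Finset.mul_sum]
        refine Finset.sum_congr rfl fun S hS => ?_
        have hmS : m ∉ S := fun hc => hmem (Finset.mem_powersetCard.mp hS |>.1 hc)
        rw [Finset.sum_insert hmS, pow_add]
      rw [himg]
      have e1 : m + 1 - (h' + 1) = m - h' := by omega
      rw [e1]
      set A := ∑ S ∈ (Finset.range m).powersetCard (h' + 1), Q ^ (∑ i ∈ S, i) with hA
      set B := ∑ S ∈ (Finset.range m).powersetCard h', Q ^ (∑ i ∈ S, i) with hB
      have hc : Q ^ ((h' + 1).choose 2) = Q ^ (h'.choose 2) * Q ^ h' := by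
        rw [← pow_add]
        congr 1
        rw [Nat.choose_succ_succ]
        simp [Nat.choose_one_right, Nat.add_comm]
      have e2 : qPoch Q Q (h' + 1) = qPoch Q Q h' * (1 - Q ^ (h' + 1)) := qPoch_succ Q h'
      have e5 : qPoch Q Q (m + 1) = qPoch Q Q m * (1 - Q ^ (m + 1)) := qPoch_succ Q m
      rcases Nat.lt_or_ge h' m with hlt | hge
      · have ihA := ih (h' + 1) hlt
        have ihB := ih h' (le_of_lt hlt)
        have e3 : m - h' = (m - (h' + 1)) + 1 := by omega
        have e4 : qPoch Q Q (m - h') = qPoch Q Q (m - (h' + 1)) * (1 - Q ^ (m - h')) := by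
          rw [e3, qPoch_succ, ← e3]
        have hp3 : Q ^ h' * Q ^ (m - h') = Q ^ m := by
          rw [← pow_add]; congr 1; omega
        linear_combination (A * qPoch Q Q (h' + 1)) * e4 +
          (1 - Q ^ (m - h')) * ihA +
          (Q ^ m * B * qPoch Q Q (m - h')) * e2 +
          (Q ^ m * (1 - Q ^ (h' + 1))) * ihB -
          Q ^ ((h' + 1).choose 2) * e5 +
          (qPoch Q Q m * (Q ^ (m + 1) - Q ^ (m - h'))) * hc -
          (Q ^ (h'.choose 2) * qPoch Q Q m) * hp3
      · have hh' : h' = m := by omega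
        subst hh'
        rw [show (Finset.range h').powersetCard (h' + 1) = ∅ from
              Finset.powersetCard_eq_empty.mpr (by simp)] at hA
        have ihB := ih h' le_rfl
        have e4 : h' - h' = 0 := by omega
        have h00 : qPoch Q Q 0 = 1 := by simp [qPoch]
        rw [e4] at ihB ⊢
        rw [hA, h00]
        rw [h00] at ihB
        simp only [Finset.sum_empty] at *
        linear_combination (Q ^ h' * B) * e2 +
          (Q ^ h' * (1 - Q ^ (h' + 1))) * ihB -
          Q ^ ((h' + 1).choose 2) * e5 +
          (qPoch Q Q h' * (Q ^ (h' + 1) - 1)) * hc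

lemma gauss_sum {Q : ℂ} (hQ : ‖Q‖ < 1) (m h : ℕ) (hh : h ≤ m) :
    ∑ S ∈ (Finset.range m).powersetCard h, Q ^ (∑ i ∈ S, i)
      = Q ^ (h.choose 2) * gbinom Q m h := by
  have h1 := gauss_sum_mul Q m h hh
  rw [gbinom, if_pos hh]
  have h2 : qPoch Q Q h ≠ 0 := qPoch_ne_zero hQ h
  have h3 : qPoch Q Q (m - h) ≠ 0 := qPoch_ne_zero hQ (m - h)
  field_simp
  linear_combination h1

lemma wIdx_append (l l' : List Bool) :
    wIdx (l ++ l') = wIdx l + wIdx l' + l.length * l'.count true := by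
  induction l with
  | nil => simp [wIdx]
  | cons x t ih => simp [wIdx, ih, List.count_append]; ring

lemma count_map_range (χ : ℕ → Bool) (n : ℕ) :
    ((List.range n).map χ).count true = ((Finset.range n).filter (fun i => χ i = true)).card := by
  induction n with
  | zero => simp
  | succ n ih =>
    rw [List.range_succ, Finset.range_add_one, List.map_append, List.count_append,
      Finset.filter_insert]
    by_cases hχ : χ n = true <;> simp [hχ, ih, Finset.card_insert_of_notMem, Finset.mem_filter]

lemma wIdx_map_range (χ : ℕ → Bool) (n : ℕ) :
    wIdx ((List.range n).map χ) = ∑ i ∈ (Finset.range n).filter (fun i => χ i = true), i := by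
  induction n with
  | zero => simp [wIdx]
  | succ n ih =>
    rw [List.range_succ, Finset.range_add_one, List.map_append, wIdx_append, Finset.filter_insert]
    by_cases hχ : χ n = true <;>
      simp [hχ, ih, wIdx, Finset.sum_insert, Finset.mem_filter, Nat.add_comm]

lemma map_range_getD (w : List Bool) :
    (List.range w.length).map (fun i => w.getD i false) = w := by
  apply List.ext_getElem
  · simp
  · intro i h1 h2
    simp [List.getElem?_eq_getElem h2]

end Aux

/-- Generating function for the partitions in `BD_{a,b,k}(m)`:
`Σ_{λ ∈ BD_{a,b,k}(m)} u^{ℓ_a} v^{ℓ_b} q^{|λ|}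
  = Σ_{h=0}^{m} u^{m-h} v^h q^{k C(m,2) + k C(h,2) + ma + (b-a)h} [m, h]_k`. -/
theorem gen_BD_m (a b k m : ℕ) (ha : 1 ≤ a) (hab : a < b) (hbk : b ≤ k)
    (hm : 1 ≤ m) (q u v : ℂ) (hq : ‖q‖ < 1) :
    ∑ᶠ l ∈ {l : List ℕ | memBD a b k m l},
        u ^ lcount k a l * v ^ lcount k b l * q ^ l.sum
      = ∑ h ∈ Finset.range (m + 1), u ^ (m - h) * v ^ h *
          q ^ (k * Nat.choose m 2 + k * Nat.choose h 2 + m * a + (b - a) * h) *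
          gbinom (q ^ k) m h := by
  have hne : a % k ≠ b % k := hmodne ha hab hbk
  obtain ⟨d, rfl⟩ : ∃ d, b = a + d := ⟨b - a, by omega⟩
  simp only [Nat.add_sub_cancel_left]
  set F : Finset ℕ → List ℕ :=
    fun S => bdBuild a (a + d) k ((List.range m).map fun i => decide (i ∈ S)) with hF
  have hfilterS : ∀ S : Finset ℕ, S ⊆ Finset.range m →
      (Finset.range m).filter (fun i => decide (i ∈ S) = true) = S := by
    intro S hS
    ext i
    simp only [Finset.mem_filter, decide_eq_true_eq]
    exact ⟨fun h => h.2, fun h => ⟨hS h, h⟩⟩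
  have hset : {l : List ℕ | memBD a (a + d) k m l}
      = ↑(((Finset.range m).powerset).image F) := by
    ext l
    simp only [Set.mem_setOf_eq, Finset.coe_image, Set.mem_image, Finset.mem_coe,
      Finset.mem_powerset]
    constructor
    · intro h
      have hlen : l.length = m := h.2.1
      have h' : memBD a (a + d) k l.length l := by rwa [hlen]
      obtain ⟨w, hw⟩ := memBD_surj ha hab hbk hne l h'
      have hwlen : w.length = m := by
        rw [← bdBuild_length (a := a) (b := a + d) (k := k) w, hw, hlen]
      refine ⟨(Finset.range m).filter (fun i => w.getD i false), Finset.filter_subset _ _, ?_⟩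
      have hword : ((List.range m).map fun i =>
          decide (i ∈ (Finset.range m).filter (fun i => w.getD i false))) = w := by
        conv_rhs => rw [← map_range_getD w]
        rw [hwlen]
        apply List.map_congr_left
        intro i hi
        rw [List.mem_range] at hi
        simp [Finset.mem_filter, Finset.mem_range, hi]
      show bdBuild a (a + d) k _ = l
      rw [hword, hw]
    · rintro ⟨S, hS, rfl⟩
      have hnil : ((List.range m).map fun i => decide (i ∈ S)) ≠ [] := by
        simp only [ne_eq, List.map_eq_nil_iff, List.range_eq_nil]
        omega
      have hmb := bdBuild_memBD ha hab hbk hne _ hnil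
      rwa [List.length_map, List.length_range] at hmb
  rw [hset, finsum_mem_coe_finset]
  have hinj : ∀ S ∈ (Finset.range m).powerset, ∀ T ∈ (Finset.range m).powerset,
      F S = F T → S = T := by
    intro S hS T hT hFST
    have hww := bdBuild_inj hab hFST
    have hpt : ∀ i ∈ List.range m, decide (i ∈ S) = decide (i ∈ T) :=
      fun i hi => List.map_inj_left.mp hww i hi
    ext i
    rw [Finset.mem_powerset] at hS hT
    constructor
    · intro hiS
      have him : i ∈ List.range m := List.mem_range.mpr (Finset.mem_range.mp (hS hiS))
      have := hpt i him
      simpa [hiS] using this.symm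
    · intro hiT
      have him : i ∈ List.range m := List.mem_range.mpr (Finset.mem_range.mp (hT hiT))
      have := hpt i him
      simpa [hiT] using this
  rw [Finset.sum_image hinj, Finset.sum_powerset, Finset.card_range]
  refine Finset.sum_congr rfl fun h hh => ?_
  rw [Finset.mem_range] at hh
  have hhm : h ≤ m := by omega
  have hQk : ‖q ^ k‖ < 1 := by
    rw [norm_pow]
    exact pow_lt_one₀ (norm_nonneg q) hq (by omega)
  have hterm : ∀ S ∈ (Finset.range m).powersetCard h,
      u ^ lcount k a (F S) * v ^ lcount k (a + d) (F S) * q ^ (F S).sum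
        = (u ^ (m - h) * v ^ h * q ^ (m * a + d * h + k * Nat.choose m 2))
            * (q ^ k) ^ (∑ i ∈ S, i) := by
    intro S hS
    obtain ⟨hSsub, hScard⟩ := Finset.mem_powersetCard.mp hS
    have hlw : ((List.range m).map fun i => decide (i ∈ S)).length = m := by simp
    have hct : ((List.range m).map fun i => decide (i ∈ S)).count true = h := by
      rw [count_map_range, hfilterS S hSsub, hScard]
    have hcf : ((List.range m).map fun i => decide (i ∈ S)).count false = m - h := by
      rw [count_false_eq, hlw, hct]
    have hwidx : wIdx ((List.range m).map fun i => decide (i ∈ S)) = ∑ i ∈ S, i := by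
      rw [wIdx_map_range, hfilterS S hSsub]
    show u ^ lcount k a (bdBuild a (a + d) k _) * v ^ lcount k (a + d) (bdBuild a (a + d) k _)
        * q ^ (bdBuild a (a + d) k _).sum = _
    rw [bdBuild_lcount_a hne, bdBuild_lcount_b hne, bdBuild_sum hab, hlw, hct, hcf, hwidx]
    simp only [Nat.add_sub_cancel_left]
    have hexp : a * m + d * h + k * (Nat.choose m 2 + ∑ i ∈ S, i)
        = (m * a + d * h + k * Nat.choose m 2) + k * (∑ i ∈ S, i) := by ring
    rw [hexp, pow_add, pow_mul]
    ring
  rw [Finset.sum_congr rfl hterm, ← Finset.mul_sum, gauss_sum hQk m h hhm]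
  have hexp2 : k * Nat.choose m 2 + k * Nat.choose h 2 + m * a + d * h
      = (m * a + d * h + k * Nat.choose m 2) + k * Nat.choose h 2 := by ring
  rw [hexp2, pow_add, ← pow_mul]
  ring
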